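/- Let f : ℝ≥0 → ℝ be continuous with f(0) ∈ [0,h] for some h > 0. Then there exists a unique pair of continuous functions (c⁰, cʰ) with c⁰(0) = cʰ(0) = 0 such that: (1) Λ(t) := f(t) + cʰ(t) + c⁰(t) ∈ [0,h] for all t; (2) c⁰ is non-decreasing and cʰ is non-increasing; (3) c⁰ is constant on every interval on which Λ never equals 0, and cʰ is constant on every interval on which Λ never equals h. -/

import Mathlib

open Set
open scoped NNReal ENNReal
open scoped Topology

/-- Solution data for the two-sided Skorohod reflection problem of `f` on `[0,h]`:
`c0` and `ch` are the compensators at `0` and at `h`,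
and `fun t => f t + ch t + c0 t` is the reflected path `Λ_{0,h}(f)`.
The support conditions on the measures `dc⁰` and `d(−cʰ)` are phrased as:
the compensator is constant on every (closed) interval on which the reflected
path avoids the corresponding boundary. -/
structure SkorohodPair (h : ℝ) (f c0 ch : ℝ≥0 → ℝ) : Prop where
  cont0 : Continuous c0
  conth : Continuous ch
  init0 : c0 0 = 0
  inith : ch 0 = 0
  mem_Icc : ∀ t, f t + ch t + c0 t ∈ Set.Icc (0 : ℝ) h
  mono0 : Monotone c0
  antih : Antitone ch
  flat0 : ∀ a b : ℝ≥0, a ≤ b → (∀ t ∈ Set.Icc a b, f t + ch t + c0 t ≠ 0) → c0 b = c0 a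
  flath : ∀ a b : ℝ≥0, a ≤ b → (∀ t ∈ Set.Icc a b, f t + ch t + c0 t ≠ h) → ch b = ch a


noncomputable def rsup (g : ℝ≥0 → ℝ) (t : ℝ≥0) : ℝ :=
  sSup ((fun s => max (-(g s)) 0) '' Set.Icc 0 t)

section rsup
variable {g g' : ℝ≥0 → ℝ} {t : ℝ≥0}

lemma rsup_bdd (hg : Continuous g) (t : ℝ≥0) :
    BddAbove ((fun s => max (-(g s)) 0) '' Set.Icc 0 t) :=
  (isCompact_Icc.image (by fun_prop)).bddAbove

lemma rsup_ne ( t : ℝ≥0) : ((fun s => max (-(g s)) 0) '' Set.Icc 0 t).Nonempty :=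
  ⟨_, ⟨0, ⟨le_refl _, zero_le⟩, rfl⟩⟩

lemma le_rsup (hg : Continuous g) {s t : ℝ≥0} (hst : s ≤ t) :
    max (-(g s)) 0 ≤ rsup g t :=
  le_csSup (rsup_bdd hg t) ⟨s, ⟨zero_le, hst⟩, rfl⟩

lemma rsup_nonneg (hg : Continuous g) (t : ℝ≥0) : 0 ≤ rsup g t :=
  le_trans (le_max_right _ _) (le_rsup hg zero_le)

lemma rsup_le {M : ℝ} (hM : ∀ s ≤ t, max (-(g s)) 0 ≤ M) : rsup g t ≤ M :=
  csSup_le (rsup_ne t) (by rintro x ⟨s, hs, rfl⟩; exact hM s hs.2)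

lemma rsup_mono (hg : Continuous g) : Monotone (rsup g) := fun a b hab =>
  csSup_le_csSup (rsup_bdd hg b) (rsup_ne a) (Set.image_mono (Set.Icc_subset_Icc_right hab))

lemma rsup_anti (hg : Continuous g) (hle : ∀ s, g s ≤ g' s) (t : ℝ≥0) :
    rsup g' t ≤ rsup g t :=
  rsup_le fun s hs => le_trans (max_le_max (neg_le_neg (hle s)) le_rfl) (le_rsup hg hs)

lemma rsup_zero (h0 : 0 ≤ g 0) : rsup g 0 = 0 := by
  have : Set.Icc (0:ℝ≥0) 0 = {0} := Set.Icc_self 0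
  rw [rsup, this, Set.image_singleton, csSup_singleton]
  simp [max_eq_right (neg_nonpos.2 h0)]

lemma add_rsup_nonneg (hg : Continuous g) (t : ℝ≥0) : 0 ≤ g t + rsup g t := by
  have := le_trans (le_max_left _ _) (le_rsup hg (le_refl t))
  linarith

lemma rsup_exists_max (hg : Continuous g) (t : ℝ≥0) :
    ∃ s, s ≤ t ∧ rsup g t = max (-(g s)) 0 ∧ rsup g s = rsup g t := by
  obtain ⟨s, hs, hmax⟩ := isCompact_Icc.exists_isMaxOn (Set.nonempty_Icc.2 zero_le)
    (Continuous.continuousOn (by fun_prop : Continuous fun s => max (-(g s)) 0))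
  have heq : rsup g t = max (-(g s)) 0 := by
    refine le_antisymm (rsup_le fun u hu => hmax ⟨zero_le, hu⟩) (le_rsup hg hs.2)
  refine ⟨s, hs.2, heq, le_antisymm (rsup_mono hg hs.2) ?_⟩
  rw [heq]; exact le_rsup hg le_rfl

lemma rsup_congr (h : ∀ s ≤ t, g s = g' s) : rsup g t = rsup g' t := by
  unfold rsup
  congr 1
  exact Set.image_congr fun s hs => by rw [h s hs.2]

lemma rsup_union (hg : Continuous g) {a b : ℝ≥0} (hab : a ≤ b) :
    rsup g b = max (rsup g a) (sSup ((fun s => max (-(g s)) 0) '' Set.Icc a b)) := by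
  rw [rsup, ← Set.Icc_union_Icc_eq_Icc (zero_le : (0:ℝ≥0) ≤ a) hab, Set.image_union]
  exact csSup_union (rsup_bdd hg a) (rsup_ne a)
    ((isCompact_Icc.image (by fun_prop)).bddAbove) ⟨_, ⟨a, Set.left_mem_Icc.2 hab, rfl⟩⟩

lemma rsup_continuous (hg : Continuous g) : Continuous (rsup g) := by
  rw [continuous_iff_continuousAt]
  intro t
  rw [Metric.continuousAt_iff]
  intro ε hε
  set φ : ℝ≥0 → ℝ := fun s => max (-(g s)) 0 with hφ
  have hφc : Continuous φ := by fun_prop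
  obtain ⟨δ, hδ, hd⟩ := Metric.continuousAt_iff.1 hφc.continuousAt (ε / 4) (by linarith)
  refine ⟨δ, hδ, fun {t'} ht' => ?_⟩
  have key : ∀ a b : ℝ≥0, a ≤ b → dist a t < δ → dist b t < δ →
      rsup g b ≤ rsup g a + ε / 2 := by
    intro a b hab hat hbt
    rw [rsup_union hg hab]
    refine max_le (by linarith [rsup_nonneg hg a, hε]) ?_
    refine csSup_le ⟨_, ⟨a, Set.left_mem_Icc.2 hab, rfl⟩⟩ ?_
    rintro x ⟨s, hs, rfl⟩
    have hst : dist s t < δ := by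
      have h1 : dist s t ≤ max (dist a t) (dist b t) := by
        rw [NNReal.dist_eq, NNReal.dist_eq, NNReal.dist_eq]
        rcases le_total (s:ℝ) (t:ℝ) with hc | hc
        · calc |(s:ℝ) - t| = (t:ℝ) - s := by
                rw [abs_sub_comm, abs_of_nonneg (by linarith)]
            _ ≤ (t:ℝ) - a := by
                have : (a:ℝ) ≤ s := hs.1; linarith
            _ ≤ |(a:ℝ) - t| := by rw [abs_sub_comm]; exact le_abs_self _
            _ ≤ _ := le_max_left _ _
        · calc |(s:ℝ) - t| = (s:ℝ) - t := abs_of_nonneg (by linarith)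
            _ ≤ (b:ℝ) - t := by
                have : (s:ℝ) ≤ b := hs.2; linarith
            _ ≤ |(b:ℝ) - t| := le_abs_self _
            _ ≤ _ := le_max_right _ _
      exact lt_of_le_of_lt h1 (max_lt hat hbt)
    have h2 : φ s ≤ φ t + ε/4 := by
      have := hd hst; rw [Real.dist_eq] at this
      have := abs_lt.1 this
      linarith [this.1, this.2]
    have h3 : φ t ≤ φ a + ε/4 := by
      have := hd hat; rw [Real.dist_eq] at this
      have := abs_lt.1 this
      linarith [this.1, this.2]
    have h4 : φ a ≤ rsup g a := le_rsup hg le_rfl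
    calc φ s ≤ φ a + ε/2 := by linarith
    _ ≤ rsup g a + ε/2 := by linarith
  have hdtt : dist t t < δ := by simpa using hδ
  rcases le_total t' t with hc | hc
  · have := key t' t hc ht' hdtt
    have h2 := rsup_mono hg hc
    rw [Real.dist_eq, abs_lt]
    constructor <;> linarith
  · have := key t t' hc hdtt ht'
    have h2 := rsup_mono hg hc
    rw [Real.dist_eq, abs_lt]
    constructor <;> linarith

lemma rsup_flat (hg : Continuous g) {a b : ℝ≥0} (hab : a ≤ b)
    (hne : ∀ s ∈ Set.Icc a b, g s + rsup g s ≠ 0) : rsup g b = rsup g a := by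
  by_contra hne'
  have hlt : rsup g a < rsup g b := lt_of_le_of_ne (rsup_mono hg hab) (Ne.symm hne')
  obtain ⟨s, hsb, hmax, hss⟩ := rsup_exists_max hg b
  have hsa : ¬ s ≤ a := fun hsa => absurd (hmax ▸ le_rsup hg hsa) (not_le.2 hlt)
  have hs_mem : s ∈ Set.Icc a b := ⟨le_of_not_ge hsa, hsb⟩
  have hpos : 0 < rsup g b := lt_of_le_of_lt (rsup_nonneg hg a) hlt
  have hval : rsup g b = -(g s) := by
    rcases max_cases (-(g s)) (0:ℝ) with ⟨h1, _⟩ | ⟨h1, _⟩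
    · rw [hmax, h1]
    · rw [hmax, h1] at hpos; exact absurd hpos (lt_irrefl _)
  exact hne s hs_mem (by rw [hss, hval]; ring)

end rsup

section construction

variable {h : ℝ} {f : ℝ≥0 → ℝ}

noncomputable def skIter (h : ℝ) (f : ℝ≥0 → ℝ) : ℕ → (ℝ≥0 → ℝ) × (ℝ≥0 → ℝ)
  | 0 => (fun _ => 0, fun _ => 0)
  | n+1 =>
      (rsup (fun t => f t + (skIter h f n).2 t),
       fun t => -(rsup (fun s => h - (f s + rsup (fun x => f x + (skIter h f n).2 x) s)) t))

lemma skIter_fst (n : ℕ) :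
    (skIter h f (n+1)).1 = rsup (fun t => f t + (skIter h f n).2 t) := rfl

lemma skIter_snd (n : ℕ) :
    (skIter h f (n+1)).2
      = fun t => -(rsup (fun s => h - (f s + (skIter h f (n+1)).1 s)) t) := rfl

lemma skIter_cont (hf : Continuous f) (n : ℕ) :
    Continuous (skIter h f n).1 ∧ Continuous (skIter h f n).2 := by
  induction n with
  | zero => exact ⟨continuous_const, continuous_const⟩
  | succ n ih =>
    have h1 : Continuous (skIter h f (n+1)).1 := by
      rw [skIter_fst]; exact rsup_continuous (hf.add ih.2)
    refine ⟨h1, ?_⟩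
    rw [skIter_snd]
    exact (rsup_continuous ((continuous_const.sub (hf.add h1)))).neg

lemma skIter_zero (hf0 : f 0 ∈ Set.Icc (0:ℝ) h) (n : ℕ) :
    (skIter h f n).1 0 = 0 ∧ (skIter h f n).2 0 = 0 := by
  induction n with
  | zero => exact ⟨rfl, rfl⟩
  | succ n ih =>
    have h1 : (skIter h f (n+1)).1 0 = 0 := by
      rw [skIter_fst]
      exact rsup_zero (by rw [ih.2]; simpa using hf0.1)
    refine ⟨h1, ?_⟩
    rw [skIter_snd]
    simp only [neg_eq_zero]
    exact rsup_zero (by rw [h1]; simpa using hf0.2)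

lemma skIter_mono (hf : Continuous f) (n : ℕ) :
    Monotone (skIter h f n).1 ∧ Antitone (skIter h f n).2 := by
  cases n with
  | zero => exact ⟨monotone_const, antitone_const⟩
  | succ n =>
    have h1 : Monotone (skIter h f (n+1)).1 := by
      rw [skIter_fst]; exact rsup_mono (hf.add (skIter_cont hf n).2)
    refine ⟨h1, ?_⟩
    rw [skIter_snd]
    intro a b hab
    simp only [neg_le_neg_iff]
    exact rsup_mono (continuous_const.sub (hf.add (skIter_cont hf (n+1)).1)) hab

lemma skIter_sign (hf : Continuous f) (n : ℕ) (t : ℝ≥0) :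
    0 ≤ (skIter h f n).1 t ∧ (skIter h f n).2 t ≤ 0 := by
  cases n with
  | zero => exact ⟨le_refl _, le_refl _⟩
  | succ n =>
    constructor
    · rw [skIter_fst]; exact rsup_nonneg (hf.add (skIter_cont hf n).2) t
    · rw [skIter_snd]
      simp only [neg_nonpos]
      exact rsup_nonneg (continuous_const.sub (hf.add (skIter_cont hf (n+1)).1)) t

lemma skIter_step (hf : Continuous f) (n : ℕ) (t : ℝ≥0) :
    (skIter h f n).1 t ≤ (skIter h f (n+1)).1 t ∧
      (skIter h f (n+1)).2 t ≤ (skIter h f n).2 t := by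
  induction n generalizing t with
  | zero =>
    constructor
    · exact (skIter_sign hf 1 t).1
    · exact (skIter_sign hf 1 t).2
  | succ n ih =>
    have h1 : ∀ s, (skIter h f (n+1)).1 s ≤ (skIter h f (n+2)).1 s := by
      intro s
      rw [skIter_fst n, skIter_fst (n+1)]
      exact rsup_anti (hf.add (skIter_cont hf (n+1)).2)
        (fun x => by simp only [Pi.add_apply]; linarith [(ih x).2]) s
    refine ⟨h1 t, ?_⟩
    rw [skIter_snd n, skIter_snd (n+1)]
    simp only [neg_le_neg_iff]
    exact rsup_anti (continuous_const.sub (hf.add (skIter_cont hf (n+2)).1))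
      (fun x => by simp only [Pi.sub_apply, Pi.add_apply]; linarith [h1 x]) t

lemma skIter_mono_n (hf : Continuous f) {m n : ℕ} (hmn : m ≤ n) (t : ℝ≥0) :
    (skIter h f m).1 t ≤ (skIter h f n).1 t ∧
      (skIter h f n).2 t ≤ (skIter h f m).2 t := by
  induction n with
  | zero => rw [Nat.le_zero.1 hmn]; exact ⟨le_refl _, le_refl _⟩
  | succ n ih =>
    rcases Nat.lt_or_ge m (n+1) with hc | hc
    · have := ih (Nat.lt_succ_iff.1 hc)
      have h2 := skIter_step (h := h) hf n t
      exact ⟨le_trans this.1 h2.1, le_trans h2.2 this.2⟩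
    · rw [Nat.le_antisymm hmn hc]; exact ⟨le_refl _, le_refl _⟩

end construction

section steps

variable {h : ℝ} {f : ℝ≥0 → ℝ}

lemma skIter_Qstep (hf : Continuous f) (m : ℕ) (s : ℝ≥0)
    (hlt : (skIter h f (m+2)).2 s < (skIter h f (m+1)).2 s) :
    ∃ u ≤ s, f u + (skIter h f (m+2)).1 u + (skIter h f (m+2)).2 u = h ∧
      (skIter h f (m+1)).1 u < (skIter h f (m+2)).1 u := by
  set g2 : ℝ≥0 → ℝ := fun x => h - (f x + (skIter h f (m+2)).1 x) with hg2
  set g1 : ℝ≥0 → ℝ := fun x => h - (f x + (skIter h f (m+1)).1 x) with hg1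
  have hg2c : Continuous g2 := continuous_const.sub (hf.add (skIter_cont hf (m+2)).1)
  have hg1c : Continuous g1 := continuous_const.sub (hf.add (skIter_cont hf (m+1)).1)
  have e2 : ∀ x, (skIter h f (m+2)).2 x = -(rsup g2 x) := fun x => by rw [skIter_snd (m+1)]
  have e1 : ∀ x, (skIter h f (m+1)).2 x = -(rsup g1 x) := fun x => by rw [skIter_snd m]
  rw [e2, e1, neg_lt_neg_iff] at hlt
  have hpos : 0 < rsup g2 s := lt_of_le_of_lt (rsup_nonneg hg1c s) hlt
  obtain ⟨u, hus, hmax, huu⟩ := rsup_exists_max hg2c s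
  have hval : -(g2 u) = rsup g2 s := by
    rcases max_cases (-(g2 u)) (0:ℝ) with ⟨h1, _⟩ | ⟨h1, _⟩
    · rw [hmax, h1]
    · rw [hmax, h1] at hpos; exact absurd hpos (lt_irrefl _)
  refine ⟨u, hus, ?_, ?_⟩
  · rw [e2, huu, ← hval]
    simp only [hg2]
    ring
  · have hle : -(g1 u) ≤ rsup g1 s :=
      le_trans (le_max_left _ _) (le_rsup hg1c hus)
    have : -(g1 u) < -(g2 u) := by rw [hval]; exact lt_of_le_of_lt hle hlt
    simp only [hg1, hg2] at this
    linarith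

lemma skIter_Pstep (hf : Continuous f) (m : ℕ) (u : ℝ≥0)
    (hlt : (skIter h f (m+1)).1 u < (skIter h f (m+2)).1 u) :
    ∃ r ≤ u, f r + (skIter h f (m+1)).2 r + (skIter h f (m+2)).1 r = 0 ∧
      (skIter h f (m+2)).1 r = (skIter h f (m+2)).1 u ∧
      (skIter h f (m+1)).2 r < (skIter h f m).2 r := by
  set g2 : ℝ≥0 → ℝ := fun x => f x + (skIter h f (m+1)).2 x with hg2
  set g1 : ℝ≥0 → ℝ := fun x => f x + (skIter h f m).2 x with hg1
  have hg2c : Continuous g2 := hf.add (skIter_cont hf (m+1)).2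
  have hg1c : Continuous g1 := hf.add (skIter_cont hf m).2
  have e2 : ∀ x, (skIter h f (m+2)).1 x = rsup g2 x := fun x => by rw [skIter_fst (m+1)]
  have e1 : ∀ x, (skIter h f (m+1)).1 x = rsup g1 x := fun x => by rw [skIter_fst m]
  rw [e2, e1] at hlt
  have hpos : 0 < rsup g2 u := lt_of_le_of_lt (rsup_nonneg hg1c u) hlt
  obtain ⟨r, hru, hmax, hrr⟩ := rsup_exists_max hg2c u
  have hval : -(g2 r) = rsup g2 u := by
    rcases max_cases (-(g2 r)) (0:ℝ) with ⟨h1, _⟩ | ⟨h1, _⟩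
    · rw [hmax, h1]
    · rw [hmax, h1] at hpos; exact absurd hpos (lt_irrefl _)
  refine ⟨r, hru, ?_, ?_, ?_⟩
  · rw [e2, hrr, ← hval]; simp only [hg2]; ring
  · rw [e2, e2, hrr]
  · have hle : -(g1 r) ≤ rsup g1 u :=
      le_trans (le_max_left _ _) (le_rsup hg1c hru)
    have : -(g1 r) < -(g2 r) := by rw [hval]; exact lt_of_le_of_lt hle hlt
    simp only [hg1, hg2] at this
    linarith

lemma skIter_descent (hf : Continuous f) (m : ℕ) (s : ℝ≥0)
    (hlt : (skIter h f (m+2)).2 s < (skIter h f (m+1)).2 s) :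
    ∃ r u : ℝ≥0, r ≤ u ∧ u ≤ s ∧ h ≤ f u - f r ∧
      (skIter h f (m+1)).2 r < (skIter h f m).2 r := by
  obtain ⟨u, hus, hΛ, hP⟩ := skIter_Qstep hf m s hlt
  obtain ⟨r, hru, hM, hceq, hQ⟩ := skIter_Pstep hf m u hP
  refine ⟨r, u, hru, hus, ?_, hQ⟩
  have h1 : (skIter h f (m+2)).2 u ≤ (skIter h f (m+2)).2 r :=
    (skIter_mono hf (m+2)).2 hru
  have h2 : (skIter h f (m+2)).2 r ≤ (skIter h f (m+1)).2 r :=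
    (skIter_step hf (m+1) r).2
  linarith

lemma skIter_count (hf : Continuous f) {T : ℝ≥0} {δ : ℝ}
    (hosc : ∀ r u : ℝ≥0, r ≤ u → u ≤ T → h ≤ f u - f r → δ ≤ (u:ℝ) - r) :
    ∀ m : ℕ, ∀ s : ℝ≥0, s ≤ T →
      (skIter h f (m+1)).2 s < (skIter h f m).2 s → (m:ℝ) * δ ≤ (s:ℝ) := by
  intro m
  induction m with
  | zero => intro s _ _; simp only [Nat.cast_zero, zero_mul]; exact s.coe_nonneg
  | succ m ih =>
    intro s hsT hlt
    obtain ⟨r, u, hru, hus, hrise, hQ⟩ := skIter_descent hf m s hlt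
    have hrT : r ≤ T := le_trans (le_trans hru hus) hsT
    have huT : u ≤ T := le_trans hus hsT
    have hd := hosc r u hru huT hrise
    have hIH := ih r hrT hQ
    push_cast
    have hus' : (u:ℝ) ≤ s := hus
    linarith
end steps

section stab
variable {h : ℝ} {f : ℝ≥0 → ℝ}

lemma skIter_stab (hh : 0 < h) (hf : Continuous f) (T : ℝ≥0) :
    ∃ M : ℕ, ∀ n, M ≤ n → ∀ s, s ≤ T →
      (skIter h f n).1 s = (skIter h f M).1 s ∧
        (skIter h f n).2 s = (skIter h f M).2 s := by
  have hUC : UniformContinuousOn f (Set.Icc 0 T) :=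
    isCompact_Icc.uniformContinuousOn_of_continuous hf.continuousOn
  obtain ⟨δ, hδ, hd⟩ := Metric.uniformContinuousOn_iff.1 hUC h hh
  have hosc : ∀ r u : ℝ≥0, r ≤ u → u ≤ T → h ≤ f u - f r → δ ≤ (u:ℝ) - r := by
    intro r u hru huT hrise
    by_contra hcon
    push_neg at hcon
    have hdru : dist u r < δ := by
      rw [NNReal.dist_eq,
        abs_of_nonneg (sub_nonneg.2 (by exact_mod_cast hru : (r:ℝ) ≤ u))]
      exact hcon
    have hlt := hd u ⟨zero_le, huT⟩ r ⟨zero_le, le_trans hru huT⟩ hdru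
    rw [Real.dist_eq] at hlt
    have := (abs_lt.1 hlt).2
    linarith
  have count := skIter_count (h := h) hf hosc
  obtain ⟨N, hN⟩ := exists_nat_gt ((T:ℝ) / δ)
  have hTN : (T:ℝ) < N * δ := by
    rw [div_lt_iff₀ hδ] at hN
    linarith
  have claimA : ∀ n, N ≤ n → ∀ s, s ≤ T →
      (skIter h f (n+1)).2 s = (skIter h f n).2 s := by
    intro n hn s hsT
    by_contra hne
    have hlt : (skIter h f (n+1)).2 s < (skIter h f n).2 s :=
      lt_of_le_of_ne (skIter_step hf n s).2 hne
    have hcount := count n s hsT hlt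
    have hc : (N:ℝ) * δ ≤ (n:ℝ) * δ := by
      have : (N:ℝ) ≤ n := by exact_mod_cast hn
      nlinarith
    have hsT' : (s:ℝ) ≤ T := hsT
    linarith
  have claimB : ∀ n, N + 1 ≤ n → ∀ s, s ≤ T →
      (skIter h f (n+1)).1 s = (skIter h f n).1 s := by
    intro n hn s hsT
    obtain ⟨m, rfl⟩ : ∃ m, n = m + 1 := ⟨n - 1, by omega⟩
    by_contra hne
    have hlt : (skIter h f (m+1)).1 s < (skIter h f (m+2)).1 s :=
      lt_of_le_of_ne (skIter_step hf (m+1) s).1 (Ne.symm hne)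
    obtain ⟨r, hrs, _, _, hQ⟩ := skIter_Pstep hf m s hlt
    have hrT : r ≤ T := le_trans hrs hsT
    have hcount := count m r hrT hQ
    have hrT' : (r:ℝ) ≤ T := hrT
    have hm : N ≤ m := by omega
    have : (N:ℝ) * δ ≤ (m:ℝ) * δ := by
      have : (N:ℝ) ≤ m := by exact_mod_cast hm
      nlinarith
    linarith
  refine ⟨N+1, ?_⟩
  intro n
  induction n with
  | zero => intro hn; exact absurd hn (by omega)
  | succ n ih =>
    intro hn s hsT
    rcases Nat.lt_or_ge n (N+1) with hc | hc
    · have : n + 1 = N + 1 := by omega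
      rw [this]
      exact ⟨rfl, rfl⟩
    · have ihs := ih hc s hsT
      constructor
      · rw [claimB n hc s hsT]; exact ihs.1
      · rw [claimA n (by omega) s hsT]; exact ihs.2

end stab

section exist
variable {h : ℝ} {f : ℝ≥0 → ℝ}

lemma skorohod_exists (hh : 0 < h) (hf : Continuous f) (hf0 : f 0 ∈ Set.Icc (0:ℝ) h) :
    ∃ c0 ch : ℝ≥0 → ℝ, SkorohodPair h f c0 ch := by
  set c0 : ℝ≥0 → ℝ := fun t => ⨆ n, (skIter h f n).1 t with hc0def
  set ch : ℝ≥0 → ℝ := fun t => ⨅ n, (skIter h f n).2 t with hchdef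
  -- identification of the limit on [0, T]
  have hsup : ∀ T : ℝ≥0, ∃ M : ℕ, ∀ s, s ≤ T →
      c0 s = (skIter h f M).1 s ∧ ch s = (skIter h f M).2 s := by
    intro T
    obtain ⟨M, hM⟩ := skIter_stab (f := f) hh hf T
    refine ⟨M, fun s hsT => ⟨?_, ?_⟩⟩
    · have hub : ∀ n, (skIter h f n).1 s ≤ (skIter h f M).1 s := by
        intro n
        rcases le_total n M with hc | hc
        · exact (skIter_mono_n hf hc s).1
        · exact le_of_eq (hM n hc s hsT).1
      exact le_antisymm (ciSup_le hub)
        (le_ciSup ⟨(skIter h f M).1 s, Set.forall_mem_range.2 hub⟩ M)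
    · have hlb : ∀ n, (skIter h f M).2 s ≤ (skIter h f n).2 s := by
        intro n
        rcases le_total n M with hc | hc
        · exact (skIter_mono_n hf hc s).2
        · exact le_of_eq (hM n hc s hsT).2.symm
      exact le_antisymm
        (ciInf_le ⟨(skIter h f M).2 s, Set.forall_mem_range.2 hlb⟩ M)
        (le_ciInf hlb)
  -- but we also need stage-stability together with identification
  have hsup2 : ∀ T : ℝ≥0, ∃ M : ℕ, (∀ s, s ≤ T →
      c0 s = (skIter h f M).1 s ∧ ch s = (skIter h f M).2 s) ∧
      (∀ n, M ≤ n → ∀ s, s ≤ T →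
        (skIter h f n).1 s = (skIter h f M).1 s ∧
        (skIter h f n).2 s = (skIter h f M).2 s) := by
    intro T
    obtain ⟨M, hM⟩ := skIter_stab (f := f) hh hf T
    obtain ⟨M', hM'⟩ := hsup T
    -- redo the identification with the same M
    refine ⟨M, fun s hsT => ⟨?_, ?_⟩, hM⟩
    · have hub : ∀ n, (skIter h f n).1 s ≤ (skIter h f M).1 s := by
        intro n
        rcases le_total n M with hc | hc
        · exact (skIter_mono_n hf hc s).1
        · exact le_of_eq (hM n hc s hsT).1
      exact le_antisymm (ciSup_le hub)
        (le_ciSup ⟨(skIter h f M).1 s, Set.forall_mem_range.2 hub⟩ M)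
    · have hlb : ∀ n, (skIter h f M).2 s ≤ (skIter h f n).2 s := by
        intro n
        rcases le_total n M with hc | hc
        · exact (skIter_mono_n hf hc s).2
        · exact le_of_eq (hM n hc s hsT).2.symm
      exact le_antisymm
        (ciInf_le ⟨(skIter h f M).2 s, Set.forall_mem_range.2 hlb⟩ M)
        (le_ciInf hlb)
  -- continuity of the limits
  have hcont : Continuous c0 ∧ Continuous ch := by
    constructor <;>
    · rw [continuous_iff_continuousAt]
      intro t
      obtain ⟨M, hM⟩ := hsup (t + 1)
      have hmem : Set.Iic (t + 1) ∈ 𝓝 t :=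
        Iic_mem_nhds (lt_add_of_pos_right t one_pos)
      first
      | exact ((skIter_cont hf M).1.continuousAt).congr
          (Filter.eventuallyEq_of_mem hmem (fun x hx => ((hM x hx).1).symm))
      | exact ((skIter_cont hf M).2.continuousAt).congr
          (Filter.eventuallyEq_of_mem hmem (fun x hx => ((hM x hx).2).symm))
  -- the fixed point identities
  have hfix0 : ∀ t, c0 t = rsup (fun x => f x + ch x) t := by
    intro t
    obtain ⟨M, hMid, hMst⟩ := hsup2 t
    have e1 : c0 t = (skIter h f (M+1)).1 t := by
      rw [(hMid t le_rfl).1, ← (hMst (M+1) (Nat.le_succ M) t le_rfl).1]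
    rw [e1, skIter_fst]
    exact rsup_congr fun x hx => by rw [(hMid x hx).2]
  have hfixh : ∀ t, ch t = -(rsup (fun x => h - (f x + c0 x)) t) := by
    intro t
    obtain ⟨M, hMid, hMst⟩ := hsup2 t
    have e1 : ch t = (skIter h f (M+1)).2 t := by
      rw [(hMid t le_rfl).2, ← (hMst (M+1) (Nat.le_succ M) t le_rfl).2]
    rw [e1, skIter_snd]
    simp only [neg_inj]
    exact rsup_congr fun x hx => by
      rw [(hMst (M+1) (Nat.le_succ M) x hx).1, ← (hMid x hx).1]
  have hgc : Continuous (fun x => f x + ch x) := hf.add hcont.2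
  have hgc' : Continuous (fun x => h - (f x + c0 x)) :=
    continuous_const.sub (hf.add hcont.1)
  refine ⟨c0, ch, ?_⟩
  constructor
  · exact hcont.1
  · exact hcont.2
  · obtain ⟨M, hM⟩ := hsup 0
    rw [(hM 0 le_rfl).1]
    exact (skIter_zero hf0 M).1
  · obtain ⟨M, hM⟩ := hsup 0
    rw [(hM 0 le_rfl).2]
    exact (skIter_zero hf0 M).2
  · intro t
    constructor
    · have := add_rsup_nonneg hgc t
      rw [← hfix0 t] at this
      linarith
    · have h1 : h - (f t + c0 t) + rsup (fun x => h - (f x + c0 x)) t ≥ 0 :=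
        add_rsup_nonneg hgc' t
      have h2 := hfixh t
      linarith
  · intro a b hab
    rw [hfix0 a, hfix0 b]
    exact rsup_mono hgc hab
  · intro a b hab
    rw [hfixh a, hfixh b]
    exact neg_le_neg (rsup_mono hgc' hab)
  · intro a b hab hne
    rw [hfix0 a, hfix0 b]
    refine rsup_flat hgc hab fun s hs => ?_
    have := hne s hs
    rw [show f s + ch s + c0 s = f s + ch s + rsup (fun x => f x + ch x) s from by
      rw [← hfix0 s]] at this
    intro heq
    exact this (by linarith)
  · intro a b hab hne
    rw [hfixh a, hfixh b, neg_inj]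
    refine rsup_flat hgc' hab fun s hs => ?_
    have h1 := hne s hs
    have h2 := hfixh s
    intro heq
    exact h1 (by linarith)

end exist

section uniq
variable {h : ℝ} {f c0 ch d0 dh : ℝ≥0 → ℝ}

lemma skorohod_le (hf : Continuous f) (p : SkorohodPair h f c0 ch)
    (q : SkorohodPair h f d0 dh) (t : ℝ≥0) :
    f t + ch t + c0 t ≤ f t + dh t + d0 t := by
  by_contra hcon
  push_neg at hcon
  set Λ : ℝ≥0 → ℝ := fun x => f x + ch x + c0 x with hΛ
  set Μ : ℝ≥0 → ℝ := fun x => f x + dh x + d0 x with hΜ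
  have hΛc : Continuous Λ := (hf.add p.conth).add p.cont0
  have hΜc : Continuous Μ := (hf.add q.conth).add q.cont0
  set S : Set ℝ≥0 := Set.Iic t ∩ {x | Λ x = Μ x} with hS
  have hScl : IsClosed S := isClosed_Iic.inter (isClosed_eq hΛc hΜc)
  have hSne : S.Nonempty := by
    refine ⟨0, (zero_le : (0:ℝ≥0) ≤ t), ?_⟩
    simp only [Set.mem_setOf_eq, hΛ, hΜ, p.init0, p.inith, q.init0, q.inith]
  have hSbdd : BddAbove S := ⟨t, fun u hu => hu.1⟩
  set s : ℝ≥0 := sSup S with hs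
  have hsS : s ∈ S := hScl.csSup_mem hSne hSbdd
  have hst : s < t := lt_of_le_of_ne hsS.1 (fun heq => by
    have := hsS.2
    rw [heq] at this
    exact absurd this (ne_of_gt hcon))
  have hnm : ∀ u, s < u → u ≤ t → Λ u ≠ Μ u := by
    intro u hsu hut heq
    exact absurd (le_csSup hSbdd ⟨hut, heq⟩) (not_le.2 hsu)
  have hsign : ∀ u, u ∈ Set.Ioc s t → Μ u < Λ u := by
    intro u hu
    rcases lt_trichotomy (Λ u) (Μ u) with hc | hc | hc
    · exfalso
      have hut : u ≤ t := hu.2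
      have : (0:ℝ) ∈ Set.Icc ((Λ - Μ) u) ((Λ - Μ) t) :=
        ⟨by simp [sub_nonpos.2 (le_of_lt hc)], by show 0 ≤ Λ t - Μ t; exact sub_nonneg.2 (le_of_lt hcon)⟩
      obtain ⟨z, hz, hz0⟩ := intermediate_value_Icc hut ((hΛc.sub hΜc).continuousOn) this
      have : Λ z = Μ z := by
        have : Λ z - Μ z = 0 := hz0
        linarith
      exact hnm z (lt_of_lt_of_le hu.1 hz.1) hz.2 this
    · exact absurd hc (hnm u hu.1 hu.2)
    · exact hc
  -- compensator constancy on (s, t]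
  have hc0const : ∀ a, a ∈ Set.Ioc s t → c0 t = c0 a := by
    intro a ha
    refine p.flat0 a t ha.2 fun x hx => ?_
    have hxm : x ∈ Set.Ioc s t := ⟨lt_of_lt_of_le ha.1 hx.1, hx.2⟩
    have h1 := hsign x hxm
    have h2 := (q.mem_Icc x).1
    intro heq
    simp only [hΛ, hΜ] at h1 h2
    linarith
  have hdhconst : ∀ a, a ∈ Set.Ioc s t → dh t = dh a := by
    intro a ha
    refine q.flath a t ha.2 fun x hx => ?_
    have hxm : x ∈ Set.Ioc s t := ⟨lt_of_lt_of_le ha.1 hx.1, hx.2⟩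
    have h1 := hsign x hxm
    have h2 := (p.mem_Icc x).2
    intro heq
    simp only [hΛ, hΜ] at h1 h2
    linarith
  -- pass to the limit a → s⁺
  have hIoc : Set.Ioc s t ∈ 𝓝[>] s := Ioc_mem_nhdsGT_of_mem ⟨le_rfl, hst⟩
  have hc0s : c0 s = c0 t := by
    have h1 : Filter.Tendsto c0 (𝓝[>] s) (𝓝 (c0 s)) :=
      (p.cont0.continuousAt).continuousWithinAt
    have h2 : Filter.Tendsto c0 (𝓝[>] s) (𝓝 (c0 t)) := by
      refine Filter.Tendsto.congr' ?_ tendsto_const_nhds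
      exact Filter.eventuallyEq_of_mem hIoc fun a ha => (hc0const a ha)
    exact tendsto_nhds_unique h1 h2
  have hdhs : dh s = dh t := by
    have h1 : Filter.Tendsto dh (𝓝[>] s) (𝓝 (dh s)) :=
      (q.conth.continuousAt).continuousWithinAt
    have h2 : Filter.Tendsto dh (𝓝[>] s) (𝓝 (dh t)) := by
      refine Filter.Tendsto.congr' ?_ tendsto_const_nhds
      exact Filter.eventuallyEq_of_mem hIoc fun a ha => (hdhconst a ha)
    exact tendsto_nhds_unique h1 h2
  have heqs : Λ s = Μ s := hsS.2
  have hch : ch t ≤ ch s := p.antih hsS.1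
  have hd0 : d0 s ≤ d0 t := q.mono0 hsS.1
  simp only [hΛ, hΜ] at heqs hcon
  linarith

end uniq

section uniq2
variable {h : ℝ} {f c0 ch d0 dh : ℝ≥0 → ℝ}

lemma skorohod_unique (hh : 0 < h) (hf : Continuous f)
    (p : SkorohodPair h f c0 ch) (q : SkorohodPair h f d0 dh) :
    c0 = d0 ∧ ch = dh := by
  have hΛΜ : ∀ x, f x + ch x + c0 x = f x + dh x + d0 x := fun x =>
    le_antisymm (skorohod_le hf p q x) (skorohod_le hf q p x)
  set u : ℝ≥0 → ℝ := fun x => c0 x - d0 x with hu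
  have hu0 : u 0 = 0 := by simp [hu, p.init0, q.init0]
  have hu' : ∀ x, u x = dh x - ch x := fun x => by
    have := hΛΜ x; simp only [hu]; linarith
  have hucont : Continuous u := p.cont0.sub q.cont0
  have hΛc : Continuous (fun x => f x + ch x + c0 x) := (hf.add p.conth).add p.cont0
  -- local constancy
  have hloc : ∀ t : ℝ≥0, ∃ V ∈ 𝓝 t, ∀ x ∈ V, u x = u t := by
    intro t
    -- choose the boundary value avoided near t
    have hcase : (f t + ch t + c0 t ≠ 0) ∨ (f t + ch t + c0 t ≠ h) := by
      rcases eq_or_ne (f t + ch t + c0 t) 0 with hc | hc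
      · right; rw [hc]; exact ne_of_lt hh
      · left; exact hc
    rcases hcase with hc | hc
    all_goals {
      first
      | (have hO : IsOpen {x | f x + ch x + c0 x ≠ 0} :=
          (isClosed_eq hΛc continuous_const).isOpen_compl
         have htO : t ∈ {x | f x + ch x + c0 x ≠ 0} := hc)
      | (have hO : IsOpen {x | f x + ch x + c0 x ≠ h} :=
          (isClosed_eq hΛc continuous_const).isOpen_compl
         have htO : t ∈ {x | f x + ch x + c0 x ≠ h} := hc)
      obtain ⟨ε, hε, hball⟩ := Metric.mem_nhds_iff.1 (hO.mem_nhds htO)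
      set d : ℝ≥0 := Real.toNNReal (ε/2) with hd
      have hdpos : 0 < d := Real.toNNReal_pos.2 (by linarith)
      have hdcoe : (d:ℝ) = ε/2 := Real.coe_toNNReal _ (by linarith)
      set a : ℝ≥0 := t - d with ha
      set b : ℝ≥0 := t + d with hb
      have hsub' : ∀ x ∈ Set.Icc a b, x ∈ Metric.ball t ε := by
        intro x hx
        rw [Metric.mem_ball, NNReal.dist_eq, abs_lt]
        have h1 : (x:ℝ) ≤ (t:ℝ) + d := by exact_mod_cast hx.2
        have h2 : (t:ℝ) ≤ (x:ℝ) + d := by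
          have : t ≤ a + d := le_tsub_add
          have h3 : a + d ≤ x + d := add_le_add_left hx.1 d
          exact_mod_cast le_trans this h3
        constructor <;> [linarith [hdcoe ▸ h2]; linarith [hdcoe ▸ h1]]
      have hmem : Set.Icc a b ∈ 𝓝 t := by
        have hIic : Set.Iic b ∈ 𝓝 t := Iic_mem_nhds (lt_add_of_pos_right t hdpos)
        have hIci : Set.Ici a ∈ 𝓝 t := by
          rcases eq_zero_or_pos a with h0 | hpos
          · rw [h0, show Set.Ici (0:ℝ≥0) = Set.univ from
              Set.eq_univ_of_forall fun x => (zero_le : (0:ℝ≥0) ≤ x)]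
            exact Filter.univ_mem
          · have hta : a ≤ t := tsub_le_self
            have htpos : 0 < t := lt_of_lt_of_le hpos hta
            exact Ici_mem_nhds (tsub_lt_self htpos hdpos)
        rw [← Set.Ici_inter_Iic]
        exact Filter.inter_mem hIci hIic
      refine ⟨Set.Icc a b, hmem, fun x hx => ?_⟩
      have htmem : t ∈ Set.Icc a b := ⟨tsub_le_self, le_self_add⟩
      rcases le_total x t with hxt | htx
      all_goals {
        first
        | (have hflat₁ := p.flat0 x t hxt fun y hy =>
              hball (hsub' y (Set.Icc_subset_Icc hx.1 htmem.2 hy))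
           have hflat₂ := q.flat0 x t hxt fun y hy => by
              rw [← hΛΜ y]
              exact hball (hsub' y (Set.Icc_subset_Icc hx.1 htmem.2 hy))
           simp only [hu]
           rw [hflat₁, hflat₂])
        | (have hflat₁ := p.flat0 t x htx fun y hy =>
              hball (hsub' y (Set.Icc_subset_Icc htmem.1 hx.2 hy))
           have hflat₂ := q.flat0 t x htx fun y hy => by
              rw [← hΛΜ y]
              exact hball (hsub' y (Set.Icc_subset_Icc htmem.1 hx.2 hy))
           simp only [hu]
           rw [hflat₁, hflat₂])
        | (have hflat₁ := p.flath x t hxt fun y hy =>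
              hball (hsub' y (Set.Icc_subset_Icc hx.1 htmem.2 hy))
           have hflat₂ := q.flath x t hxt fun y hy => by
              rw [← hΛΜ y]
              exact hball (hsub' y (Set.Icc_subset_Icc hx.1 htmem.2 hy))
           rw [hu' x, hu' t, hflat₁, hflat₂])
        | (have hflat₁ := p.flath t x htx fun y hy =>
              hball (hsub' y (Set.Icc_subset_Icc htmem.1 hx.2 hy))
           have hflat₂ := q.flath t x htx fun y hy => by
              rw [← hΛΜ y]
              exact hball (hsub' y (Set.Icc_subset_Icc htmem.1 hx.2 hy))
           rw [hu' x, hu' t, hflat₁, hflat₂])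
      }
    }
  -- global: u vanishes everywhere
  have huzero : ∀ t, u t = 0 := by
    intro t
    by_contra hne
    set S : Set ℝ≥0 := Set.Iic t ∩ {x | u x = 0} with hS
    have hScl : IsClosed S := isClosed_Iic.inter (isClosed_eq hucont continuous_const)
    have hSne : S.Nonempty := ⟨0, (zero_le : (0:ℝ≥0) ≤ t), hu0⟩
    have hSbdd : BddAbove S := ⟨t, fun x hx => hx.1⟩
    set s : ℝ≥0 := sSup S with hs
    have hsS : s ∈ S := hScl.csSup_mem hSne hSbdd
    have hst : s < t := lt_of_le_of_ne hsS.1 fun heq => hne (heq ▸ hsS.2)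
    obtain ⟨V, hV, hVeq⟩ := hloc s
    have hIoc : Set.Ioc s t ∈ 𝓝[>] s := Ioc_mem_nhdsGT_of_mem ⟨le_rfl, hst⟩
    have hVin : V ∈ 𝓝[>] s := nhdsWithin_le_nhds hV
    obtain ⟨x, hxV, hxIoc⟩ := Filter.NeBot.nonempty_of_mem
      (by infer_instance) (Filter.inter_mem hVin hIoc)
    have hux : u x = 0 := by rw [hVeq x hxV]; exact hsS.2
    exact absurd (le_csSup hSbdd ⟨hxIoc.2, hux⟩) (not_le.2 hxIoc.1)
  constructor
  · funext x
    have := huzero x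
    simp only [hu] at this
    linarith
  · funext x
    have h1 := huzero x
    have h2 := hΛΜ x
    simp only [hu] at h1
    linarith

end uniq2

/-- **Two-sided Skorohod reflection** (Theorem 1): for continuous `f : ℝ≥0 → ℝ` with
`f 0 ∈ [0,h]`, there is a unique pair of continuous compensators `(c⁰, cʰ)` vanishing at `0`
such that `Λ(t) = f t + cʰ t + c⁰ t ∈ [0,h]`, `c⁰` is non-decreasing, `cʰ` is non-increasing,
`c⁰` is constant on every interval on which `Λ` never equals `0`, and `cʰ` is constant on every
interval on which `Λ` never equals `h`. -/
theorem two_sided_skorohod_reflection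
    (h : ℝ) (hh : 0 < h) (f : ℝ≥0 → ℝ) (hf : Continuous f)
    (hf0 : f 0 ∈ Set.Icc (0 : ℝ) h) :
    ∃! p : (ℝ≥0 → ℝ) × (ℝ≥0 → ℝ), SkorohodPair h f p.1 p.2 := by
  obtain ⟨c0, ch, hp⟩ := skorohod_exists hh hf hf0
  refine ⟨(c0, ch), hp, ?_⟩
  rintro ⟨d0, dh⟩ hq
  obtain ⟨h1, h2⟩ := skorohod_unique hh hf hq hp
  exact Prod.ext h1 h2
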